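/- Let G be a monoidal pseudoregular groupoid (the operations ∗ and ⊛ coincide). Then for each idempotent e of V(G), the group π_e^⋈(G) is abelian. -/
import Mathlib


/-- An inverse monoid. -/
class InverseMonoid (M : Type*) extends Monoid M, Inv M where
  mul_inv_mul : ∀ a : M, a * a⁻¹ * a = a
  inv_mul_inv : ∀ a : M, a⁻¹ * a * a⁻¹ = a⁻¹
  idem_comm : ∀ e f : M, e * e = e → f * f = f → e * f = f * e

/-- A semiregular groupoid: a groupoid (given algebraically by its set of arrows `G`
over a vertex monoid `V`, with totalised composition `comp` whose axioms are guarded by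
the composability condition `r α = d β`) together with left and right actions of the
vertex monoid `V` on arrows, satisfying the axioms of Definition 2.1. -/
structure SemiregularGroupoid (V : Type*) [Monoid V] (G : Type*) where
  d : G → V
  r : G → V
  comp : G → G → G
  id : V → G
  inv : G → G
  d_id : ∀ v, d (id v) = v
  r_id : ∀ v, r (id v) = v
  d_comp : ∀ α β, r α = d β → d (comp α β) = d α
  r_comp : ∀ α β, r α = d β → r (comp α β) = r β
  comp_assoc : ∀ α β γ, r α = d β → r β = d γ →
    comp (comp α β) γ = comp α (comp β γ)
  id_comp : ∀ α, comp (id (d α)) α = α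
  comp_id : ∀ α, comp α (id (r α)) = α
  d_inv : ∀ α, d (inv α) = r α
  r_inv : ∀ α, r (inv α) = d α
  comp_inv : ∀ α, comp α (inv α) = id (d α)
  inv_comp : ∀ α, comp (inv α) α = id (r α)
  actL : V → G → G
  actR : G → V → G
  actL_mul : ∀ x y α, actL (x * y) α = actL x (actL y α)
  actR_mul : ∀ α x y, actR α (x * y) = actR (actR α x) y
  actL_actR : ∀ x α y, actR (actL x α) y = actL x (actR α y)
  one_actL : ∀ α, actL 1 α = α
  actR_one : ∀ α, actR α 1 = α
  d_actL : ∀ x α, d (actL x α) = x * d α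
  d_actR : ∀ α x, d (actR α x) = d α * x
  r_actL : ∀ x α, r (actL x α) = x * r α
  r_actR : ∀ α x, r (actR α x) = r α * x
  actL_comp : ∀ x α β, r α = d β → actL x (comp α β) = comp (actL x α) (actL x β)
  actR_comp : ∀ α β x, r α = d β → actR (comp α β) x = comp (actR α x) (actR β x)
  actL_id : ∀ x y, actL x (id y) = id (x * y)
  actR_id : ∀ x y, actR (id x) y = id (x * y)

/-- The operation `α ∗ β = (α ◁ βd) ∘ (αr ▷ β)`. -/
def SemiregularGroupoid.star {V : Type*} [Monoid V] {G : Type*}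
    (S : SemiregularGroupoid V G) (α β : G) : G :=
  S.comp (S.actR α (S.d β)) (S.actL (S.r α) β)

/-- The operation `α ⊛ β = (αd ▷ β) ∘ (α ◁ βr)`. -/
def SemiregularGroupoid.ostar {V : Type*} [Monoid V] {G : Type*}
    (S : SemiregularGroupoid V G) (α β : G) : G :=
  S.comp (S.actL (S.d α) β) (S.actR α (S.r β))

/-- `star_e^⋈(G) = {e ▷ α ◁ e : αd = e}`. -/
def bowtieStar {V : Type*} [InverseMonoid V] {G : Type*}
    (S : SemiregularGroupoid V G) (e : V) : Set G :=
  {γ | ∃ α : G, S.d α = e ∧ γ = S.actL e (S.actR α e)}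

/-- `π_e^⋈(G) = {α ∈ star_e^⋈(G) : αr = e}`. -/
def bowtiePi {V : Type*} [InverseMonoid V] {G : Type*}
    (S : SemiregularGroupoid V G) (e : V) : Set G :=
  {γ ∈ bowtieStar S e | S.r γ = e}

/-- in a monoidal pseudoregular groupoid (where `∗` and `⊛` coincide),
the group `π_e^⋈(G)` is abelian for each idempotent `e` of `V(G)`. -/
theorem stmt10 {V : Type*} [InverseMonoid V] {G : Type*}
    (S : SemiregularGroupoid V G)
    (hmonoidal : ∀ α β : G, S.star α β = S.ostar α β)
    (e : V) (he : e * e = e) :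
    ∀ γ ∈ bowtiePi S e, ∀ δ ∈ bowtiePi S e, S.star γ δ = S.star δ γ := by
  -- facts for any element of bowtiePi: d = e, actR · e = id, actL e · = id
  have key : ∀ γ ∈ bowtiePi S e, S.d γ = e ∧ S.actR γ e = γ ∧ S.actL e γ = γ := by
    rintro γ ⟨⟨α, hd, rfl⟩, -⟩
    refine ⟨?_, ?_, ?_⟩
    · rw [S.d_actL, S.d_actR, hd, he, he]
    · rw [S.actL_actR, ← S.actR_mul, he]
    · rw [← S.actL_mul, he]
  intro γ hγ δ hδ
  obtain ⟨hdγ, hRγ, hLγ⟩ := key γ hγ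
  obtain ⟨hdδ, hRδ, hLδ⟩ := key δ hδ
  have hrγ : S.r γ = e := hγ.2
  have hrδ : S.r δ = e := hδ.2
  have h1 : S.star γ δ = S.comp γ δ := by
    rw [SemiregularGroupoid.star, hdδ, hrγ, hRγ, hLδ]
  have h2 : S.ostar γ δ = S.comp δ γ := by
    rw [SemiregularGroupoid.ostar, hdγ, hrδ, hRγ, hLδ]
  have h3 : S.star δ γ = S.comp δ γ := by
    rw [SemiregularGroupoid.star, hdγ, hrδ, hRδ, hLγ]
  rw [h1, h3, ← h2, ← h1, hmonoidal]
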